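/- Let f, g : ℂⁿ → ℂ be holomorphic and h = f·conj(g). A point z with f(z)g(z) ≠ 0 is a critical point of h (real derivative not surjective onto ℝ² ≅ ℂ) if and only if ‖grad f(z)‖·|g(z)| = ‖grad g(z)‖·|f(z)| and there exist suitable phases making the two gradient vectors proportional; in particular, if grad f(z) ≠ 0 and ‖(∂f/∂z_i)(z)·\overline{g(z)}‖ ≠ ‖f(z)·\overline{(∂g/∂z_i)}(z)‖ as vectors in ℂⁿ (i.e. the vectors (\bar g·grad f)(z) and (\bar f · \overline{grad g})(z) have different norms), then z is a regular point of h. -/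

import Mathlib

open Function

namespace CPCAux

open Complex

lemma euclidean_sum {n : ℕ} (v : EuclideanSpace ℂ (Fin n)) :
    ∑ i, v i • EuclideanSpace.single i (1:ℂ) = v := by
  ext j
  rw [WithLp.ofLp_sum, Finset.sum_apply]
  simp [EuclideanSpace.single_apply]

lemma normSq_ne (A B : ℂ) (h : ‖A‖ ≠ ‖B‖) : normSq A ≠ normSq B := by
  intro hc
  apply h
  have h2 : ‖A‖^2 = ‖B‖^2 := by
    rw [← Complex.normSq_eq_norm_sq, ← Complex.normSq_eq_norm_sq]
    exact hc
  calc ‖A‖ = Real.sqrt (‖A‖^2) := (Real.sqrt_sq (norm_nonneg _)).symm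
    _ = Real.sqrt (‖B‖^2) := by rw [h2]
    _ = ‖B‖ := Real.sqrt_sq (norm_nonneg _)

lemma normSq_eq_of_norm (A B : ℂ) (h : ‖A‖ = ‖B‖) : normSq A = normSq B := by
  rw [Complex.normSq_eq_norm_sq, Complex.normSq_eq_norm_sq, h]

lemma scalar_surj (A B : ℂ) (h : ‖A‖ ≠ ‖B‖) (w : ℂ) :
    ∃ t : ℂ, A * t + B * (starRingEnd ℂ) t = w := by
  have hd := normSq_ne A B h
  have hd' : ((normSq A : ℂ) - (normSq B : ℂ)) ≠ 0 := by
    rw [← Complex.ofReal_sub]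
    exact_mod_cast sub_ne_zero.mpr hd
  refine ⟨((starRingEnd ℂ) A * w - B * (starRingEnd ℂ) w) / ((normSq A : ℂ) - (normSq B : ℂ)), ?_⟩
  rw [map_div₀, map_sub, map_mul, map_mul, conj_conj, conj_conj, map_sub,
    Complex.conj_ofReal, Complex.conj_ofReal]
  rw [mul_div_assoc', mul_div_assoc', ← add_div, div_eq_iff hd',
    ← Complex.mul_conj, ← Complex.mul_conj]
  ring

lemma polarize (x y p q : ℂ) (hpq : ‖p‖ = ‖q‖) (hxy : ‖x‖ = ‖y‖)
    (h1 : ‖x + 1 * p‖ = ‖y + 1 * q‖) (hI : ‖x + Complex.I * p‖ = ‖y + Complex.I * q‖) :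
    x * (starRingEnd ℂ) p = y * (starRingEnd ℂ) q := by
  have e0 := normSq_eq_of_norm _ _ hxy
  have e1 := normSq_eq_of_norm _ _ h1
  have eI := normSq_eq_of_norm _ _ hI
  have epq := normSq_eq_of_norm _ _ hpq
  simp only [Complex.normSq_apply, Complex.add_re, Complex.add_im, Complex.mul_re,
    Complex.mul_im, Complex.one_re, Complex.one_im, Complex.I_re, Complex.I_im] at e0 e1 eI epq
  apply Complex.ext <;>
    simp only [Complex.mul_re, Complex.mul_im, Complex.conj_re, Complex.conj_im]
  · linear_combination (e1 - e0 - epq) / 2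
  · linear_combination (eI - e0 - epq) / 2

lemma key {E : Type*} [NormedAddCommGroup E] [NormedSpace ℂ E]
    (a b : E →ₗ[ℂ] ℂ) (T : E → ℂ)
    (hT : ∀ v, T v = a v + (starRingEnd ℂ) (b v)) :
    (¬ Surjective T) ↔ ∃ μ : ℂ, ‖μ‖ = 1 ∧ ∀ v, a v = μ * b v := by
  constructor
  · intro hns
    have hnorm : ∀ v, ‖a v‖ = ‖b v‖ := by
      intro v
      by_contra hne
      apply hns
      intro w
      have hne' : ‖a v‖ ≠ ‖(starRingEnd ℂ) (b v)‖ := by simpa using hne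
      obtain ⟨t, ht⟩ := scalar_surj (a v) ((starRingEnd ℂ) (b v)) hne' w
      refine ⟨t • v, ?_⟩
      rw [hT]
      simp only [map_smul, smul_eq_mul, map_mul]
      linear_combination ht
    by_cases hb : ∀ v, b v = 0
    · refine ⟨1, by norm_num, fun v => ?_⟩
      have h0 : a v = 0 := by
        rw [← norm_eq_zero]
        simpa [hb v] using hnorm v
      rw [h0, hb v]; ring
    · push_neg at hb
      obtain ⟨v₀, hv₀⟩ := hb
      have ha₀ : a v₀ ≠ 0 := by
        rw [← norm_ne_zero_iff] at hv₀ ⊢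
        rw [hnorm v₀]; exact hv₀
      refine ⟨a v₀ / b v₀, ?_, fun v => ?_⟩
      · rw [norm_div, hnorm v₀, div_self (norm_ne_zero_iff.mpr hv₀)]
      · have hpol := polarize (a v) (b v) (a v₀) (b v₀) (hnorm v₀) (hnorm v)
          (by simpa using hnorm (v + (1:ℂ) • v₀))
          (by simpa using hnorm (v + Complex.I • v₀))
        have hcb : (starRingEnd ℂ) (b v₀) ≠ 0 := by simpa using hv₀
        have hnq : (a v₀) * (starRingEnd ℂ) (a v₀) = (b v₀) * (starRingEnd ℂ) (b v₀) := by
          rw [Complex.mul_conj, Complex.mul_conj]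
          exact_mod_cast normSq_eq_of_norm _ _ (hnorm v₀)
        have hmain : a v * b v₀ = b v * a v₀ := by
          apply mul_right_cancel₀ hcb
          linear_combination (a v₀) * hpol - (a v) * hnq
        field_simp
        linear_combination hmain
  · rintro ⟨μ, hμ, hab⟩ hS
    have hμ' : ‖μ‖ = 1 := hμ
    set ν : ℂ := Complex.exp ((μ.arg / 2 : ℝ) * Complex.I) with hνdef
    have hν1 : ‖ν‖ = 1 := Complex.norm_exp_ofReal_mul_I _
    have hν0 : ν ≠ 0 := Complex.exp_ne_zero _
    have hν2 : ν * ν = μ := by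
      rw [hνdef, ← Complex.exp_add, ← add_mul, ← Complex.ofReal_add]
      have h : (μ.arg / 2 + μ.arg / 2 : ℝ) = μ.arg := by ring
      rw [h]
      calc Complex.exp (↑μ.arg * Complex.I)
          = ↑‖μ‖ * Complex.exp (↑μ.arg * Complex.I) := by rw [hμ']; norm_num
        _ = μ := Complex.norm_mul_exp_arg_mul_I μ
    have h1 : ν * (starRingEnd ℂ) ν = 1 := by
      rw [Complex.mul_conj]
      norm_cast
      rw [Complex.normSq_eq_norm_sq, hν1]; norm_num
    obtain ⟨v, hv⟩ := hS (Complex.I * ν)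
    have hr : T v = ν * (ν * b v + (starRingEnd ℂ) (ν * b v)) := by
      rw [hT, hab, map_mul]
      linear_combination (-(b v)) * hν2 - ((starRingEnd ℂ) (b v)) * h1
    have him : (ν * b v + (starRingEnd ℂ) (ν * b v)).im = 0 := by
      simp
      ring
    have hre : ν * b v + (starRingEnd ℂ) (ν * b v) = Complex.I := by
      apply mul_left_cancel₀ hν0
      rw [← hr, hv]; ring
    rw [hre, Complex.I_im] at him
    norm_num at him

lemma deriv_formula {n : ℕ} (f g : EuclideanSpace ℂ (Fin n) → ℂ)
    (hf : Differentiable ℂ f) (hg : Differentiable ℂ g) (z v : EuclideanSpace ℂ (Fin n)) :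
    fderiv ℝ (fun w => f w * (starRingEnd ℂ) (g w)) z v
      = (starRingEnd ℂ) (g z) * fderiv ℂ f z v + f z * (starRingEnd ℂ) (fderiv ℂ g z v) := by
  have h1 : HasFDerivAt f ((fderiv ℂ f z).restrictScalars ℝ) z :=
    ((hf z).hasFDerivAt).restrictScalars ℝ
  have h2 : HasFDerivAt g ((fderiv ℂ g z).restrictScalars ℝ) z :=
    ((hg z).hasFDerivAt).restrictScalars ℝ
  have hc : HasFDerivAt (fun w => (starRingEnd ℂ) (g w))
      ((Complex.conjCLE : ℂ →L[ℝ] ℂ).comp ((fderiv ℂ g z).restrictScalars ℝ)) z := by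
    exact (Complex.conjCLE.hasFDerivAt).comp z h2
  have hmul : HasFDerivAt (fun w => f w * (starRingEnd ℂ) (g w)) _ z := h1.mul hc
  rw [hmul.fderiv]
  simp [Complex.conjCLE_apply]
  ring

lemma sqrt_sum_smul {ι : Type*} [Fintype ι] (c : ℝ) (hc : 0 ≤ c) (x : ι → ℝ) :
    c * Real.sqrt (∑ i, x i ^ 2) = Real.sqrt (∑ i, (c * x i) ^ 2) := by
  rw [show (∑ i, (c * x i)^2) = c^2 * ∑ i, x i ^2 by
      rw [Finset.mul_sum]; exact Finset.sum_congr rfl (fun i _ => by ring),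
    Real.sqrt_mul (sq_nonneg c), Real.sqrt_sq hc]

end CPCAux

/-- For `h = f·conj g` and `z` with `f(z)·g(z) ≠ 0`: `z` is a critical
point of `h` iff `‖grad f(z)‖·|g(z)| = ‖grad g(z)‖·|f(z)|` and there is a unit phase
making the two gradient vectors proportional; in particular, if `grad f(z) ≠ 0` and the
vectors `conj(g)·grad f` and `conj(f)·conj(grad g)` have different norms, then `z` is a
regular point of `h`. -/
theorem critical_point_characterization {n : ℕ}
    (f g : EuclideanSpace ℂ (Fin n) → ℂ)
    (hf : Differentiable ℂ f) (hg : Differentiable ℂ g)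
    (z : EuclideanSpace ℂ (Fin n)) (hz : f z * g z ≠ 0) :
    ((¬ Surjective (fderiv ℝ (fun w => f w * (starRingEnd ℂ) (g w)) z)) ↔
      (‖g z‖ * Real.sqrt (∑ i : Fin n, ‖fderiv ℂ f z (EuclideanSpace.single i 1)‖ ^ 2)
          = ‖f z‖ * Real.sqrt (∑ i : Fin n, ‖fderiv ℂ g z (EuclideanSpace.single i 1)‖ ^ 2)
        ∧ ∃ μ : ℂ, ‖μ‖ = 1 ∧ ∀ i : Fin n,
            (starRingEnd ℂ) (g z) * fderiv ℂ f z (EuclideanSpace.single i 1)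
              = μ * ((starRingEnd ℂ) (f z) * fderiv ℂ g z (EuclideanSpace.single i 1)))) ∧
    ((∃ i : Fin n, fderiv ℂ f z (EuclideanSpace.single i 1) ≠ 0) →
      Real.sqrt (∑ i : Fin n,
          ‖fderiv ℂ f z (EuclideanSpace.single i 1) * (starRingEnd ℂ) (g z)‖ ^ 2)
        ≠ Real.sqrt (∑ i : Fin n,
          ‖(starRingEnd ℂ) (f z) * (starRingEnd ℂ) (fderiv ℂ g z (EuclideanSpace.single i 1))‖ ^ 2) →
      Surjective (fderiv ℝ (fun w => f w * (starRingEnd ℂ) (g w)) z)) := by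
  classical
  set F := fderiv ℂ f z with hF
  set G := fderiv ℂ g z with hG
  set a : EuclideanSpace ℂ (Fin n) →ₗ[ℂ] ℂ :=
    (starRingEnd ℂ) (g z) • (F : EuclideanSpace ℂ (Fin n) →ₗ[ℂ] ℂ) with ha
  set b : EuclideanSpace ℂ (Fin n) →ₗ[ℂ] ℂ :=
    (starRingEnd ℂ) (f z) • (G : EuclideanSpace ℂ (Fin n) →ₗ[ℂ] ℂ) with hb
  have hav : ∀ v, a v = (starRingEnd ℂ) (g z) * F v := fun v => rfl
  have hbv : ∀ v, b v = (starRingEnd ℂ) (f z) * G v := fun v => rfl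
  have hT : ∀ v, fderiv ℝ (fun w => f w * (starRingEnd ℂ) (g w)) z v
      = a v + (starRingEnd ℂ) (b v) := by
    intro v
    rw [CPCAux.deriv_formula f g hf hg z v, hav, hbv, map_mul, Complex.conj_conj]
  have hkey := CPCAux.key a b _ hT
  -- basis extension
  have hext : ∀ μ : ℂ, (∀ i, a (EuclideanSpace.single i 1) = μ * b (EuclideanSpace.single i 1)) →
      ∀ v, a v = μ * b v := by
    intro μ hi v
    have hv := CPCAux.euclidean_sum v
    calc a v = a (∑ i, v i • EuclideanSpace.single i (1:ℂ)) := by rw [hv]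
      _ = ∑ i, v i • a (EuclideanSpace.single i 1) := by rw [map_sum]; simp [map_smul]
      _ = ∑ i, v i • (μ * b (EuclideanSpace.single i 1)) := by
          exact Finset.sum_congr rfl (fun i _ => by rw [hi i])
      _ = μ * ∑ i, v i • b (EuclideanSpace.single i 1) := by
          rw [Finset.mul_sum]
          exact Finset.sum_congr rfl (fun i _ => by simp only [smul_eq_mul]; ring)
      _ = μ * b (∑ i, v i • EuclideanSpace.single i (1:ℂ)) := by rw [map_sum]; simp [map_smul]
      _ = μ * b v := by rw [hv]
  -- main iff
  have hiff : (¬ Surjective (fderiv ℝ (fun w => f w * (starRingEnd ℂ) (g w)) z)) ↔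
      ∃ μ : ℂ, ‖μ‖ = 1 ∧ ∀ i : Fin n,
        (starRingEnd ℂ) (g z) * F (EuclideanSpace.single i 1)
          = μ * ((starRingEnd ℂ) (f z) * G (EuclideanSpace.single i 1)) := by
    rw [hkey]
    constructor
    · rintro ⟨μ, hμ, hv⟩
      exact ⟨μ, hμ, fun i => by rw [← hav, ← hbv]; exact hv _⟩
    · rintro ⟨μ, hμ, hi⟩
      exact ⟨μ, hμ, hext μ (fun i => by rw [hav, hbv]; exact hi i)⟩
  -- per-coordinate norm equality from μ
  have hni : ∀ μ : ℂ, ‖μ‖ = 1 →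
      (∀ i : Fin n, (starRingEnd ℂ) (g z) * F (EuclideanSpace.single i 1)
          = μ * ((starRingEnd ℂ) (f z) * G (EuclideanSpace.single i 1))) →
      ∀ i : Fin n, ‖g z‖ * ‖F (EuclideanSpace.single i 1)‖
        = ‖f z‖ * ‖G (EuclideanSpace.single i 1)‖ := by
    intro μ hμ hi i
    have := congrArg norm (hi i)
    simpa [norm_mul, hμ, RCLike.norm_conj] using this
  constructor
  · rw [hiff]
    constructor
    · rintro ⟨μ, hμ, hi⟩
      refine ⟨?_, μ, hμ, hi⟩
      rw [CPCAux.sqrt_sum_smul _ (norm_nonneg (g z)), CPCAux.sqrt_sum_smul _ (norm_nonneg (f z))]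
      congr 1
      exact Finset.sum_congr rfl (fun i _ => by rw [hni μ hμ hi i])
    · rintro ⟨-, μ, hμ, hi⟩
      exact ⟨μ, hμ, hi⟩
  · intro _ hne
    by_contra hns
    rcases hiff.mp hns with ⟨μ, hμ, hi⟩
    apply hne
    congr 1
    refine Finset.sum_congr rfl (fun i _ => ?_)
    have h := hni μ hμ hi i
    rw [norm_mul, norm_mul, RCLike.norm_conj, RCLike.norm_conj, mul_comm]
    rw [h, RCLike.norm_conj]
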